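/- For every d×d orthogonal matrix O and every δ > 0, there exists a d×d orthogonal matrix R with rational entries such that max_{i,j} |O_{ij} − R_{ij}| < δ, and each entry of R has denominator bounded by a constant depending only on d and δ. -/

import Mathlib

open Matrix

theorem sign_diag (n : ℕ) (M : Matrix (Fin n) (Fin n) ℝ) :
    ∃ e : Fin n → ℝ, (∀ i, e i = 1 ∨ e i = -1) ∧ (Matrix.diagonal e + M).det ≠ 0 := by
  induction n with
  | zero => exact ⟨fun i => 1, fun i => i.elim0, by simp [Matrix.det_fin_zero]⟩
  | succ n ih =>
    obtain ⟨e', he', hc⟩ := ih (M.submatrix Fin.succ Fin.succ)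
    set c := (Matrix.diagonal e' + M.submatrix Fin.succ Fin.succ).det with hcdef
    have key : ∀ x : ℝ, (Matrix.diagonal (Fin.cons x e') + M).det
        = (Matrix.diagonal (Fin.cons 0 e') + M).det + x * c := by
      intro x
      have hrow : Matrix.diagonal (Fin.cons x e') + M =
          Matrix.updateRow (Matrix.diagonal (Fin.cons 0 e') + M) 0
            ((Matrix.diagonal (Fin.cons (0:ℝ) e') + M) 0 +
              x • (Pi.single (0 : Fin (n+1)) (1:ℝ) : Fin (n+1) → ℝ)) := by
        ext i j
        rcases Fin.eq_zero_or_eq_succ i with rfl | ⟨k, rfl⟩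
        · rcases Fin.eq_zero_or_eq_succ j with rfl | ⟨m, rfl⟩
          · simp [Matrix.updateRow_self, Matrix.diagonal_apply, Pi.single_apply]; ring
          · simp [Matrix.updateRow_self, Matrix.diagonal_apply, Pi.single_apply,
              (Fin.succ_ne_zero m).symm, Fin.succ_ne_zero]
        · simp [Matrix.updateRow_ne (Fin.succ_ne_zero k), Matrix.diagonal_apply]
      rw [hrow, Matrix.det_updateRow_add, Matrix.det_updateRow_smul,
        Matrix.updateRow_eq_self]
      congr 2
      rw [Matrix.det_succ_row_zero]
      rw [Fintype.sum_eq_single (0 : Fin (n+1))]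
      · have hsub : ((Matrix.diagonal (Fin.cons (0:ℝ) e') + M).updateRow 0
            (Pi.single (0 : Fin (n+1)) (1:ℝ))).submatrix Fin.succ (Fin.succAbove 0)
            = Matrix.diagonal e' + M.submatrix Fin.succ Fin.succ := by
          ext i j
          simp [Matrix.updateRow_ne (Fin.succ_ne_zero _), Matrix.diagonal_apply,
            Fin.succ_inj, Fin.succAbove_zero]
        rw [hsub]
        simp [Matrix.updateRow_self, hcdef]
      · intro j hj
        simp [Matrix.updateRow_self, Pi.single_apply, hj]
    rcases eq_or_ne ((Matrix.diagonal (Fin.cons (1:ℝ) e') + M).det) 0 with h1 | h1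
    · refine ⟨Fin.cons (-1) e', fun i => ?_, ?_⟩
      · refine Fin.cases ?_ ?_ i
        · right; simp
        · intro i; simpa using he' i
      · rw [key]
        rw [key] at h1
        intro h2
        exact hc (by nlinarith [h1, h2])
    · exact ⟨Fin.cons 1 e', fun i => by
        refine Fin.cases ?_ ?_ i
        · left; simp
        · intro i; simpa using he' i, h1⟩


variable {F : Type*} [Field F] [LinearOrder F] [IsStrictOrderedRing F] {d : ℕ}

theorem skew_unit (A : Matrix (Fin d) (Fin d) F) (h : Aᵀ = -A) :
    IsUnit (1 + A).det := by
  rw [← Matrix.isUnit_iff_isUnit_det, ← Matrix.mulVec_injective_iff_isUnit]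
  intro v w hvw
  have key : ∀ u : Fin d → F, (1 + A) *ᵥ u = 0 → u = 0 := by
    intro u hu
    have h1 : u ⬝ᵥ ((1 + A) *ᵥ u) = 0 := by rw [hu]; simp
    have h2 : u ⬝ᵥ (A *ᵥ u) = 0 := by
      have e1 : u ⬝ᵥ (A *ᵥ u) = (u ᵥ* A) ⬝ᵥ u := Matrix.dotProduct_mulVec u A u
      have e2 : u ᵥ* A = Aᵀ *ᵥ u := (Matrix.mulVec_transpose A u).symm
      rw [e2, h, Matrix.neg_mulVec, neg_dotProduct, dotProduct_comm] at e1
      rw [dotProduct_comm]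
      linarith
    rw [Matrix.add_mulVec, Matrix.one_mulVec] at hu
    have h4 : u ⬝ᵥ u = 0 := by
      have := congrArg (fun w => u ⬝ᵥ w) hu
      simpa [dotProduct_add, h2] using this
    exact dotProduct_self_eq_zero.mp h4
  have : (1 + A) *ᵥ (v - w) = 0 := by
    rw [Matrix.mulVec_sub, hvw, sub_self]
  exact sub_eq_zero.mp (key _ this)


variable {F : Type*} [Field F] [LinearOrder F] [IsStrictOrderedRing F] {d : ℕ}


theorem skew_unit' (A : Matrix (Fin d) (Fin d) F) (h : Aᵀ = -A) :
    IsUnit (1 - A).det := by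
  have : (-A)ᵀ = -(-A) := by rw [Matrix.transpose_neg, h, neg_neg]
  simpa [sub_eq_add_neg] using skew_unit (-A) this

theorem cayley_orth (A : Matrix (Fin d) (Fin d) F) (h : Aᵀ = -A) :
    ((1 - A) * (1 + A)⁻¹)ᵀ * ((1 - A) * (1 + A)⁻¹) = 1 := by
  have hP := skew_unit A h
  have hM := skew_unit' A h
  have hT : ((1 - A) * (1 + A)⁻¹)ᵀ = (1 - A)⁻¹ * (1 + A) := by
    rw [Matrix.transpose_mul, Matrix.transpose_nonsing_inv, Matrix.transpose_add,
      Matrix.transpose_sub, Matrix.transpose_one, h]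
    rw [sub_neg_eq_add, ← sub_eq_add_neg]
  rw [hT]
  have hcomm : (1 + A) * (1 - A) = (1 - A) * (1 + A) := by noncomm_ring
  calc (1 - A)⁻¹ * (1 + A) * ((1 - A) * (1 + A)⁻¹)
      = (1 - A)⁻¹ * ((1 + A) * (1 - A)) * (1 + A)⁻¹ := by
        rw [mul_assoc, mul_assoc, mul_assoc]
    _ = (1 - A)⁻¹ * ((1 - A) * (1 + A)) * (1 + A)⁻¹ := by rw [hcomm]
    _ = ((1 - A)⁻¹ * (1 - A)) * ((1 + A) * (1 + A)⁻¹) := by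
        rw [mul_assoc, mul_assoc, mul_assoc]
    _ = 1 := by rw [Matrix.nonsing_inv_mul _ hM, Matrix.mul_nonsing_inv _ hP, one_mul]

-- inverse Cayley: skewness
theorem inv_cayley_skew (O : Matrix (Fin d) (Fin d) F) (hO : Oᵀ * O = 1)
    (hdet : IsUnit (1 + O).det) :
    ((1 - O) * (1 + O)⁻¹)ᵀ = -((1 - O) * (1 + O)⁻¹) := by
  have hdetT : IsUnit (1 + Oᵀ).det := by
    have : (1 + Oᵀ) = (1 + O)ᵀ := by rw [Matrix.transpose_add, Matrix.transpose_one]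
    rwa [this, Matrix.det_transpose]
  have hAT : ((1 - O) * (1 + O)⁻¹)ᵀ = (1 + Oᵀ)⁻¹ * (1 - Oᵀ) := by
    rw [Matrix.transpose_mul, Matrix.transpose_nonsing_inv, Matrix.transpose_add,
      Matrix.transpose_sub, Matrix.transpose_one]
  rw [hAT]
  have hXP : (1 - Oᵀ) * (1 + O) = (1 + Oᵀ) * (-(1 - O)) := by
    have e1 : (1 - Oᵀ) * (1 + O) = 1 + O - Oᵀ - Oᵀ * O := by noncomm_ring
    have e2 : (1 + Oᵀ) * (-(1 - O)) = Oᵀ * O - 1 + O - Oᵀ := by noncomm_ring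
    rw [e1, e2, hO]; abel
  have hX : (1 - Oᵀ) = (1 + Oᵀ) * (-(1 - O)) * (1 + O)⁻¹ := by
    rw [← hXP, mul_assoc, Matrix.mul_nonsing_inv _ hdet, mul_one]
  rw [hX, ← mul_assoc, ← mul_assoc, Matrix.nonsing_inv_mul _ hdetT, one_mul, neg_mul]

-- inverse Cayley: recovery
theorem inv_cayley_eq (O : Matrix (Fin d) (Fin d) F) (hO : Oᵀ * O = 1)
    (hdet : IsUnit (1 + O).det) :
    (1 - ((1 - O) * (1 + O)⁻¹)) * (1 + ((1 - O) * (1 + O)⁻¹))⁻¹ = O := by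
  set A := (1 - O) * (1 + O)⁻¹ with hA
  have h1A : 1 + A = (2 : F) • (1 + O)⁻¹ := by
    rw [hA]
    calc (1 : Matrix (Fin d) (Fin d) F) + (1 - O) * (1 + O)⁻¹
        = (1 + O) * (1 + O)⁻¹ + (1 - O) * (1 + O)⁻¹ := by
          rw [Matrix.mul_nonsing_inv _ hdet]
      _ = ((1 + O) + (1 - O)) * (1 + O)⁻¹ := by rw [← Matrix.add_mul]
      _ = ((2 : F) • (1 : Matrix (Fin d) (Fin d) F)) * (1 + O)⁻¹ := by
          congr 1; rw [two_smul]; abel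
      _ = (2 : F) • (1 + O)⁻¹ := by rw [Matrix.smul_mul, one_mul]
  have h2A : 1 - A = O * (1 + A) := by
    rw [h1A, mul_smul_comm, hA]
    calc (1 : Matrix (Fin d) (Fin d) F) - (1 - O) * (1 + O)⁻¹
        = (1 + O) * (1 + O)⁻¹ - (1 - O) * (1 + O)⁻¹ := by
          rw [Matrix.mul_nonsing_inv _ hdet]
      _ = ((1 + O) - (1 - O)) * (1 + O)⁻¹ := by rw [← Matrix.sub_mul]
      _ = ((2 : F) • O) * (1 + O)⁻¹ := by congr 1; rw [two_smul]; abel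
      _ = (2 : F) • (O * (1 + O)⁻¹) := by rw [Matrix.smul_mul]
  have hAskew : Aᵀ = -A := inv_cayley_skew O hO hdet
  have hunit : IsUnit (1 + A).det := skew_unit A hAskew
  rw [h2A, mul_assoc, Matrix.mul_nonsing_inv _ hunit, mul_one]

section MetricPart
attribute [local instance] Matrix.normedAddCommGroup


noncomputable def cay (d : ℕ) (M : Matrix (Fin d) (Fin d) ℝ) : Matrix (Fin d) (Fin d) ℝ :=
  ((1 + M).det)⁻¹ • ((1 - M) * (1 + M).adjugate)

theorem cay_contAt (d : ℕ) (A : Matrix (Fin d) (Fin d) ℝ) (h : (1 + A).det ≠ 0) :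
    ContinuousAt (cay d) A := by
  show ContinuousAt ((fun M : Matrix (Fin d) (Fin d) ℝ => ((1 + M).det)⁻¹) •
    (fun M : Matrix (Fin d) (Fin d) ℝ => (1 - M) * (1 + M).adjugate)) A
  apply ContinuousAt.smul
  · exact ((continuous_const.add continuous_id).matrix_det).continuousAt.inv₀ h
  · exact (((continuous_const.sub continuous_id).matrix_mul
      ((continuous_const.add continuous_id).matrix_adjugate))).continuousAt

theorem cay_eq (d : ℕ) (M : Matrix (Fin d) (Fin d) ℝ) (h : (1 + M).det ≠ 0) :
    cay d M = (1 - M) * (1 + M)⁻¹ := by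
  rw [cay, Matrix.inv_def, Ring.inverse_eq_inv, mul_smul_comm]

theorem entrywise_cont {d : ℕ} {f : Matrix (Fin d) (Fin d) ℝ → Matrix (Fin d) (Fin d) ℝ}
    {A : Matrix (Fin d) (Fin d) ℝ} (hf : ContinuousAt f A) {ε : ℝ} (hε : 0 < ε) :
    ∃ η > 0, ∀ M : Matrix (Fin d) (Fin d) ℝ,
      (∀ i j, |M i j - A i j| < η) → ∀ i j, |f M i j - f A i j| < ε := by
  replace hf := Metric.continuousAt_iff.mp hf
  obtain ⟨η, hη, h⟩ := hf ε hε
  refine ⟨η, hη, fun M hM i j => ?_⟩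
  have hd : dist M A < η := by
    refine (dist_pi_lt_iff hη).mpr ?_
    intro i
    rw [dist_pi_lt_iff hη]
    intro j
    rw [Real.dist_eq]
    exact hM i j
  have := h hd
  replace this := (dist_pi_lt_iff hε).mp this
  have := this i
  rw [dist_pi_lt_iff hε] at this
  have := this j
  rwa [Real.dist_eq] at this

theorem dense_rat (d : ℕ) (O : Matrix (Fin d) (Fin d) ℝ) (hO : Oᵀ * O = 1) (ε : ℝ)
    (hε : 0 < ε) :
    ∃ Q : Matrix (Fin d) (Fin d) ℚ, Qᵀ * Q = 1 ∧ ∀ i j, |O i j - (Q i j : ℝ)| < ε := by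
  obtain ⟨e, he, hdet0⟩ := sign_diag d O
  set D := Matrix.diagonal e with hD
  have hD2 : D * D = 1 := by
    rw [hD, Matrix.diagonal_mul_diagonal]
    have h2 : (fun i => e i * e i) = fun _ : Fin d => (1 : ℝ) :=
      funext fun i => by rcases he i with h | h <;> rw [h] <;> norm_num
    rw [h2, Matrix.diagonal_one]
  have hDT : Dᵀ = D := Matrix.diagonal_transpose e
  set O₂ := D * O with hO₂def
  have hO₂ : O₂ᵀ * O₂ = 1 := by
    rw [hO₂def, Matrix.transpose_mul, hDT, Matrix.mul_assoc, ← Matrix.mul_assoc D D O,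
      hD2, Matrix.one_mul, hO]
  have hDO2 : D * O₂ = O := by rw [hO₂def, ← Matrix.mul_assoc, hD2, Matrix.one_mul]
  have hdet2 : (1 + O₂).det ≠ 0 := by
    have hDO : D + O = D * (1 + O₂) := by
      rw [Matrix.mul_add, Matrix.mul_one, hDO2]
    rw [hDO, Matrix.det_mul] at hdet0
    exact fun h => hdet0 (by rw [h, mul_zero])
  have hunit2 : IsUnit (1 + O₂).det := isUnit_iff_ne_zero.mpr hdet2
  set A := (1 - O₂) * (1 + O₂)⁻¹ with hAdef
  have hAskew : Aᵀ = -A := inv_cayley_skew O₂ hO₂ hunit2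
  have hdetA : (1 + A).det ≠ 0 := (skew_unit A hAskew).ne_zero
  have hfA : cay d A = O₂ := by
    rw [cay_eq d A hdetA, hAdef]
    exact inv_cayley_eq O₂ hO₂ hunit2
  obtain ⟨η, hη, hcont⟩ := entrywise_cont (cay_contAt d A hdetA) hε
  choose q hq using fun x : ℝ => exists_rat_near x hη
  set B : Matrix (Fin d) (Fin d) ℚ :=
    Matrix.of fun i j => if i < j then q (A i j) else if j < i then -q (A j i) else 0 with hBdef
  have hBskew : Bᵀ = -B := by
    ext i j
    rcases lt_trichotomy i j with h | h | h
    · simp [hBdef, Matrix.transpose_apply, h, not_lt.mpr h.le, h.ne, h.ne']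
    · subst h; simp [hBdef, Matrix.transpose_apply]
    · simp [hBdef, Matrix.transpose_apply, h, not_lt.mpr h.le, h.ne, h.ne']
  have hAdiag : ∀ i, A i i = 0 := by
    intro i
    have := congrFun (congrFun hAskew i) i
    simp only [Matrix.transpose_apply, Matrix.neg_apply] at this
    linarith
  have hAij : ∀ i j, A i j = -A j i := by
    intro i j
    have := congrFun (congrFun hAskew j) i
    simpa only [Matrix.transpose_apply, Matrix.neg_apply] using this
  set φ : Matrix (Fin d) (Fin d) ℚ →+* Matrix (Fin d) (Fin d) ℝ := (Rat.castHom ℝ).mapMatrix with hφ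
  set Bm := φ B with hBm
  have hBmE : ∀ i j, Bm i j = ((B i j : ℚ) : ℝ) := by
    intro i j; rw [hBm, hφ, RingHom.mapMatrix_apply, Matrix.map_apply, Rat.coe_castHom]
  have hclose : ∀ i j, |Bm i j - A i j| < η := by
    intro i j
    rw [hBmE]
    rcases lt_trichotomy i j with h | h | h
    · rw [hBdef]
      simp only [Matrix.of_apply, h, if_pos]
      rw [abs_sub_comm]
      exact hq (A i j)
    · subst h
      rw [hBdef]
      simp only [Matrix.of_apply, lt_irrefl, if_neg, if_false, hAdiag i]
      simpa using hη
    · rw [hBdef]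
      simp only [Matrix.of_apply, not_lt.mpr h.le, h.ne', if_neg, if_false, h, if_pos]
      rw [hAij i j]
      push_cast
      rw [show -(q (A j i) : ℝ) - -A j i = -((q (A j i) : ℝ) - A j i) by ring, abs_neg,
        abs_sub_comm]
      exact hq (A j i)
  have hBmskew : Bmᵀ = -Bm := by
    ext i j
    have := congrFun (congrFun hBskew i) j
    simp only [Matrix.transpose_apply, Matrix.neg_apply] at this ⊢
    rw [hBmE, hBmE, this]
    push_cast
    ring
  have hdetB : IsUnit (1 + B).det := skew_unit B hBskew
  have hdetBm : (1 + Bm).det ≠ 0 := (skew_unit Bm hBmskew).ne_zero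
  set C : Matrix (Fin d) (Fin d) ℚ := (1 - B) * (1 + B)⁻¹ with hCdef
  have hCorth : Cᵀ * C = 1 := cayley_orth B hBskew
  have hinv : φ ((1 + B)⁻¹) = (1 + Bm)⁻¹ := by
    refine (Matrix.inv_eq_right_inv ?_).symm
    have h1 : (1 + Bm) = φ (1 + B) := by rw [map_add, _root_.map_one]
    rw [h1, ← _root_.map_mul, Matrix.mul_nonsing_inv _ hdetB, _root_.map_one]
  have hCmap : φ C = cay d Bm := by
    rw [cay_eq d Bm hdetBm, hCdef, _root_.map_mul, hinv, map_sub, _root_.map_one]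
  have hCclose : ∀ i j, |O₂ i j - ((C i j : ℚ) : ℝ)| < ε := by
    intro i j
    have h1 : ((C i j : ℚ) : ℝ) = (φ C) i j := by
      rw [hφ, RingHom.mapMatrix_apply, Matrix.map_apply, Rat.coe_castHom]
    rw [h1, hCmap]
    have := hcont Bm hclose i j
    rw [hfA] at this
    rw [abs_sub_comm]
    exact this
  -- final assembly
  set eq : Fin d → ℚ := fun i => if e i = 1 then 1 else -1 with heqdef
  have heq : ∀ i, ((eq i : ℚ) : ℝ) = e i := by
    intro i
    rcases he i with h | h
    · simp [heqdef, h]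
    · rw [heqdef]
      simp only [h]
      norm_num
  have heq2 : ∀ i, eq i * eq i = 1 := by
    intro i
    rw [heqdef]
    dsimp only
    split <;> norm_num
  set Dq := Matrix.diagonal eq with hDq
  have hDq2 : Dq * Dq = 1 := by
    rw [hDq, Matrix.diagonal_mul_diagonal]
    have h2 : (fun i => eq i * eq i) = fun _ : Fin d => (1 : ℚ) := funext fun i => heq2 i
    rw [h2, Matrix.diagonal_one]
  have hDqT : Dqᵀ = Dq := Matrix.diagonal_transpose eq
  refine ⟨Dq * C, ?_, ?_⟩
  · rw [Matrix.transpose_mul, hDqT, Matrix.mul_assoc, ← Matrix.mul_assoc Dq Dq C, hDq2,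
      Matrix.one_mul, hCorth]
  · intro i j
    have h1 : O i j = e i * O₂ i j := by
      rw [← hDO2, hD, Matrix.diagonal_mul]
    have h2 : (((Dq * C) i j : ℚ) : ℝ) = e i * ((C i j : ℚ) : ℝ) := by
      rw [hDq, Matrix.diagonal_mul]
      push_cast
      rw [heq]
    rw [h1, h2, ← mul_sub, abs_mul]
    have he1 : |e i| = 1 := by rcases he i with h | h <;> rw [h] <;> norm_num
    rw [he1, one_mul]
    exact hCclose i j

end MetricPart

/-- Rational approximation of orthogonal matrices (Schmutz): for every `δ > 0` there is a
bound `K = K(d, δ)` such that every `d×d` orthogonal matrix `O` admits an orthogonal matrix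
`R` with rational entries, entrywise `δ`-close to `O`, whose entries have denominators at
most `K`. -/
theorem stmt_8 (d : ℕ) (δ : ℝ) (hδ : 0 < δ) :
    ∃ K : ℕ, ∀ O : Matrix (Fin d) (Fin d) ℝ, Oᵀ * O = 1 →
      ∃ R : Matrix (Fin d) (Fin d) ℝ, Rᵀ * R = 1 ∧
        (∀ i j, |O i j - R i j| < δ) ∧
        (∀ i j, ∃ q : ℚ, R i j = (q : ℝ) ∧ q.den ≤ K) := by
  classical
  set S : Set (Matrix (Fin d) (Fin d) ℝ) := {M | Mᵀ * M = 1} with hS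
  -- compactness of S
  have hclosed : IsClosed S := by
    have hcont : Continuous fun M : Matrix (Fin d) (Fin d) ℝ => Mᵀ * M :=
      (continuous_id.matrix_transpose).matrix_mul continuous_id
    have : S = (fun M : Matrix (Fin d) (Fin d) ℝ => Mᵀ * M) ⁻¹' {1} := by
      ext M; simp [hS]
    rw [this]
    exact IsClosed.preimage hcont isClosed_singleton
  have hsub : S ⊆ Set.pi Set.univ fun _ : Fin d =>
      Set.pi Set.univ fun _ : Fin d => Set.Icc (-1 : ℝ) 1 := by
    intro M hM
    intro i _ j _
    have h1 : (Mᵀ * M) j j = 1 := by rw [hM]; simp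
    have h2 : ∑ k, M k j * M k j = 1 := by
      rw [← h1, Matrix.mul_apply]; rfl
    have h3 : M i j * M i j ≤ 1 := by
      rw [← h2]
      exact Finset.single_le_sum (fun k _ => mul_self_nonneg (M k j))
        (Finset.mem_univ i)
    constructor <;> nlinarith
  have hcomp : IsCompact S := by
    refine IsCompact.of_isClosed_subset ?_ hclosed hsub
    exact isCompact_univ_pi fun _ => isCompact_univ_pi fun _ => isCompact_Icc
  -- open cover by rational orthogonal balls
  set ι := {Q : Matrix (Fin d) (Fin d) ℚ // Qᵀ * Q = 1} with hι
  set U : ι → Set (Matrix (Fin d) (Fin d) ℝ) :=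
    fun Q => {M | ∀ i j, |M i j - (Q.1 i j : ℝ)| < δ} with hU
  have hUopen : ∀ Q, IsOpen (U Q) := by
    intro Q
    have : U Q = ⋂ i, ⋂ j, (fun M : Matrix (Fin d) (Fin d) ℝ => M i j) ⁻¹'
        Metric.ball ((Q.1 i j : ℝ)) δ := by
      ext M
      simp [hU, Metric.mem_ball, Real.dist_eq]
    rw [this]
    refine isOpen_iInter_of_finite fun i => isOpen_iInter_of_finite fun j => ?_
    exact IsOpen.preimage (continuous_id.matrix_elem i j) Metric.isOpen_ball
  have hcover : S ⊆ ⋃ Q, U Q := by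
    intro M hM
    obtain ⟨Q, hQ1, hQ2⟩ := dense_rat d M hM δ hδ
    exact Set.mem_iUnion.mpr ⟨⟨Q, hQ1⟩, hQ2⟩
  obtain ⟨t, ht⟩ := hcomp.elim_finite_subcover U hUopen hcover
  refine ⟨t.sup fun Q => Finset.univ.sup fun p : Fin d × Fin d => (Q.1 p.1 p.2).den,
    fun O hO => ?_⟩
  have hOS : O ∈ S := hO
  obtain ⟨Q, hQt, hQO⟩ := Set.mem_iUnion₂.mp (ht hOS)
  refine ⟨(Q.1).map (fun x : ℚ => (x : ℝ)), ?_, ?_, ?_⟩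
  · have := congrArg (fun M : Matrix (Fin d) (Fin d) ℚ =>
      ((Rat.castHom ℝ).mapMatrix : Matrix (Fin d) (Fin d) ℚ →+* Matrix (Fin d) (Fin d) ℝ) M) Q.2
    simp only [_root_.map_mul, _root_.map_one] at this
    have htr : ((Rat.castHom ℝ).mapMatrix : Matrix (Fin d) (Fin d) ℚ →+* _) Q.1ᵀ
        = ((Q.1).map (fun x : ℚ => (x : ℝ)))ᵀ := by
      rw [RingHom.mapMatrix_apply]
      ext i j
      simp [Matrix.map_apply]
    rw [htr, RingHom.mapMatrix_apply] at this
    exact this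
  · intro i j
    have := hQO i j
    simpa [Matrix.map_apply] using this
  · intro i j
    refine ⟨Q.1 i j, by simp [Matrix.map_apply], ?_⟩
    refine le_trans ?_ (Finset.le_sup hQt)
    exact Finset.le_sup (f := fun p : Fin d × Fin d => (Q.1 p.1 p.2).den)
      (Finset.mem_univ (i, j))
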